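/- Fix n ≥ 2 and parameters β_i > 0, ν_i ∈ (0,1) and ρ_i ∈ (0,1) for i = 1,…,n. Then the well-mixed consumption system has exactly one equilibrium (x̄, ȳ_1, …, ȳ_n) ∈ ℝ^{n+1}, and this equilibrium satisfies x̄ + Σ_{i=1}^n ȳ_i = 1. -/

import Mathlib

/-- Equilibrium condition for the well-mixed consumption system:
`ẋ = (1−x)x − x·Σᵢ yᵢ`,
`ẏᵢ = βᵢ((1−νᵢ)(x−ρᵢ) + νᵢ((1/(n−1))·Σ_{j≠i} yⱼ − yᵢ))`. -/
def WellMixedEq (n : ℕ) (β ν ρ : Fin n → ℝ) (x : ℝ) (y : Fin n → ℝ) : Prop :=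
  ((1 - x) * x - x * ∑ i, y i = 0) ∧
  ∀ i : Fin n,
    β i * ((1 - ν i) * (x - ρ i)
      + ν i * ((1 / ((n : ℝ) - 1)) * (∑ j ∈ Finset.univ.erase i, y j) - y i)) = 0

/-- Rearrangement of the `i`-th equilibrium equation when `x = 1 - S`. -/
lemma per_eq (nr ν ρ S yi : ℝ) (hn : nr - 1 ≠ 0) :
    ((1 - ν) * ((1 - S) - ρ) + ν * ((1 / (nr - 1)) * (S - yi) - yi) = 0) ↔
    nr * ν * yi = (nr - 1) * (1 - ν) * (1 - ρ) + S * (nr * ν - (nr - 1)) := by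
  rw [show (1 - ν) * ((1 - S) - ρ) + ν * ((1 / (nr - 1)) * (S - yi) - yi)
      = (1/(nr-1)) * ((nr - 1) * (1 - ν) * (1 - ρ) + S * (nr * ν - (nr - 1)) - nr * ν * yi) by
    field_simp; ring]
  constructor
  · intro h
    have := (mul_eq_zero.mp h).resolve_left (by simpa using hn)
    linarith
  · intro h
    rw [h]; ring

/-- Rearrangement of the `i`-th equilibrium equation when `x = 0`. -/
lemma per_eq_zero (nr ν ρ S yi : ℝ) (hn : nr - 1 ≠ 0) :
    ((1 - ν) * (0 - ρ) + ν * ((1 / (nr - 1)) * (S - yi) - yi) = 0) ↔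
    ν * (S - nr * yi) = (nr - 1) * (1 - ν) * ρ := by
  rw [show (1 - ν) * (0 - ρ) + ν * ((1 / (nr - 1)) * (S - yi) - yi)
      = (1/(nr-1)) * (ν * (S - nr * yi) - (nr - 1) * (1 - ν) * ρ) by
    field_simp; ring]
  constructor
  · intro h
    have := (mul_eq_zero.mp h).resolve_left (by simpa using hn)
    linarith
  · intro h
    rw [h]; ring

/-- With `νᵢ ∈ (0,1)` and `ρᵢ ∈ (0,1)`, the well-mixed consumption system has exactly
one equilibrium, and the equilibrium satisfies `x̄ + Σᵢ ȳᵢ = 1`. -/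
theorem well_mixed_unique_equilibrium (n : ℕ) (hn : 2 ≤ n)
    (β ν ρ : Fin n → ℝ) (hβ : ∀ i, 0 < β i)
    (hν : ∀ i, ν i ∈ Set.Ioo (0:ℝ) 1) (hρ : ∀ i, ρ i ∈ Set.Ioo (0:ℝ) 1) :
    (∃! p : ℝ × (Fin n → ℝ), WellMixedEq n β ν ρ p.1 p.2) ∧
    (∀ (x : ℝ) (y : Fin n → ℝ), WellMixedEq n β ν ρ x y → x + ∑ i, y i = 1) := by
  have hn2 : (2:ℝ) ≤ (n:ℝ) := by exact_mod_cast hn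
  have hn1 : (1:ℝ) < (n:ℝ) := by linarith
  have hn0 : (n:ℝ) ≠ 0 := by linarith
  have hnm1 : (n:ℝ) - 1 ≠ 0 := by intro h; linarith [h]
  have hnm1pos : (0:ℝ) < (n:ℝ) - 1 := by linarith
  have hνpos : ∀ i, 0 < ν i := fun i => (hν i).1
  have hν0 : ∀ i, ν i ≠ 0 := fun i => ne_of_gt (hνpos i)
  have hnν : ∀ i, (n:ℝ) * ν i ≠ 0 := fun i => mul_ne_zero hn0 (hν0 i)
  -- the affine data: y i = A i + S * B i
  set A : Fin n → ℝ := fun i => ((n:ℝ) - 1) * (1 - ν i) * (1 - ρ i) / ((n:ℝ) * ν i) with hA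
  set B : Fin n → ℝ := fun i => ((n:ℝ) * ν i - ((n:ℝ) - 1)) / ((n:ℝ) * ν i) with hB
  -- the coefficient 1 - ∑ B is positive
  have hBval : ∀ i, B i = 1 - ((n:ℝ) - 1) / ((n:ℝ) * ν i) := by
    intro i
    simp only [hB]
    rw [sub_div, div_self (hnν i)]
  have hBi : ∀ i, B i < 1 - ((n:ℝ) - 1) / (n:ℝ) := by
    intro i
    rw [hBval i]
    have h1 : ((n:ℝ) - 1) / ((n:ℝ)) < ((n:ℝ) - 1) / ((n:ℝ) * ν i) := by
      apply div_lt_div_of_pos_left hnm1pos (mul_pos (by linarith) (hνpos i))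
      nlinarith [(hν i).2, hνpos i]
    linarith
  have hsumB : ∑ i, B i < 1 := by
    have h1 : ∑ i, B i < ∑ _i : Fin n, (1 - ((n:ℝ) - 1) / (n:ℝ)) :=
      Finset.sum_lt_sum_of_nonempty (Finset.univ_nonempty_iff.mpr ⟨⟨0, by omega⟩⟩)
        (fun i _ => hBi i)
    have h2 : ∑ _i : Fin n, (1 - ((n:ℝ) - 1) / (n:ℝ)) = (n:ℝ) * (1 - ((n:ℝ) - 1) / (n:ℝ)) := by
      rw [Finset.sum_const, Finset.card_univ, Fintype.card_fin, nsmul_eq_mul]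
    have h3 : (n:ℝ) * (1 - ((n:ℝ) - 1) / (n:ℝ)) = 1 := by field_simp; ring
    linarith
  have hden : 1 - ∑ i, B i ≠ 0 := by linarith
  -- the unique solution
  set K : ℝ := (∑ i, A i) / (1 - ∑ i, B i) with hK
  set ystar : Fin n → ℝ := fun i => A i + K * B i with hystar
  have hKsum : ∑ i, ystar i = K := by
    have : ∑ i, ystar i = (∑ i, A i) + K * ∑ i, B i := by
      rw [hystar]; rw [Finset.sum_add_distrib, ← Finset.mul_sum]
    rw [this, hK]
    field_simp
    ring
  -- characterization of equilibria
  have char : ∀ (x : ℝ) (y : Fin n → ℝ), WellMixedEq n β ν ρ x y ↔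
      (x = 1 - ∑ i, y i ∧ ∀ i, y i = A i + (∑ j, y j) * B i) := by
    intro x y
    constructor
    · rintro ⟨h0, hi⟩
      set S : ℝ := ∑ i, y i with hS
      have hbr : ∀ i, (1 - ν i) * (x - ρ i)
          + ν i * ((1 / ((n : ℝ) - 1)) * (S - y i) - y i) = 0 := by
        intro i
        have h := hi i
        rw [Finset.sum_erase_eq_sub (Finset.mem_univ i)] at h
        exact (mul_eq_zero.mp h).resolve_left (ne_of_gt (hβ i))
      -- x ≠ 0
      have hx0 : x ≠ 0 := by
        intro hx
        have hlt : ∀ i, (n:ℝ) * y i < S := by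
          intro i
          have h := hbr i
          rw [hx] at h
          have h2 := (per_eq_zero (n:ℝ) (ν i) (ρ i) S (y i) hnm1).mp h
          have hpos : 0 < ν i * (S - (n:ℝ) * y i) := by
            rw [h2]
            have := (hν i).2
            have := (hρ i).1
            apply mul_pos (mul_pos hnm1pos (by linarith))
            linarith
          rcases mul_pos_iff.mp hpos with ⟨_, h⟩ | ⟨h, _⟩
          · linarith
          · exact absurd h (not_lt.mpr (le_of_lt (hνpos i)))
        have h1 : ∑ i, (n:ℝ) * y i < ∑ _i : Fin n, S :=
          Finset.sum_lt_sum_of_nonempty (Finset.univ_nonempty_iff.mpr ⟨⟨0, by omega⟩⟩)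
            (fun i _ => hlt i)
        rw [← Finset.mul_sum, ← hS, Finset.sum_const, Finset.card_univ, Fintype.card_fin,
          nsmul_eq_mul] at h1
        nlinarith [h1]
      have hx : x = 1 - S := by
        have : x * (1 - x - S) = 0 := by rw [← h0]; ring
        have := (mul_eq_zero.mp this).resolve_left hx0
        linarith
      refine ⟨hx, fun i => ?_⟩
      have h := hbr i
      rw [hx] at h
      have h2 := (per_eq (n:ℝ) (ν i) (ρ i) S (y i) hnm1).mp h
      simp only [hA, hB]
      field_simp [hν0 i, hn0]
      linear_combination h2
    · rintro ⟨hx, hy⟩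
      set S : ℝ := ∑ i, y i with hS
      constructor
      · rw [hx]; ring
      · intro i
        rw [Finset.sum_erase_eq_sub (Finset.mem_univ i), ← hS, hx]
        have h2 : (n:ℝ) * ν i * y i
            = ((n:ℝ) - 1) * (1 - ν i) * (1 - ρ i) + S * ((n:ℝ) * ν i - ((n:ℝ) - 1)) := by
          rw [hy i]
          simp only [hA, hB]
          field_simp [hν0 i, hn0]
        have := (per_eq (n:ℝ) (ν i) (ρ i) S (y i) hnm1).mpr h2
        rw [this, mul_zero]
  -- finish
  constructor
  · refine ⟨(1 - K, ystar), ?_, ?_⟩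
    · exact (char (1 - K) ystar).mpr ⟨by rw [hKsum], fun i => by rw [hKsum]⟩
    · rintro ⟨x, y⟩ hq
      have hq' : WellMixedEq n β ν ρ x y := hq
      obtain ⟨hx, hy⟩ := (char x y).mp hq'
      set S : ℝ := ∑ i, y i with hS
      have hSK : S = K := by
        have h1 : S = (∑ i, A i) + S * ∑ i, B i := by
          calc S = ∑ i, (A i + S * B i) := by
                rw [hS]; exact Finset.sum_congr rfl (fun i _ => hy i)
            _ = (∑ i, A i) + S * ∑ i, B i := by
                rw [Finset.sum_add_distrib, ← Finset.mul_sum]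
        rw [hK, eq_div_iff hden]
        linarith [h1]
      have hyy : y = ystar := by
        funext i
        rw [hy i, hSK]
      have hxx : x = 1 - K := by rw [hx, hSK]
      simp only [Prod.mk.injEq]
      exact ⟨hxx, hyy⟩
  · intro x y h
    rw [char] at h
    linarith [h.1]
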